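/- Let χ₁, χ₂ : ℝ^{2d} → ℝ^{2d} be bi-Lipschitz bijections, and let k₁, k₂ : ℝ^{2d} × ℝ^{2d} → ℂ be measurable functions such that for every s ≥ 0 there are constants C₁(s), C₂(s) with |k_i(w,z)| ≤ C_i(s) ⟨z − χ_i(w)⟩^{-s} for all w, z ∈ ℝ^{2d}, i = 1, 2. Then for every s ≥ 0 there is a constant C(s) — which can be taken of the form C₀(s)·C₁(s')·C₂(s') for a suitable s' ≥ s, with C₀(s) depending only on s, d, and the Lipschitz constants of χ₁ and χ₁^{-1} — such that |∫_{ℝ^{2d}} k₁(u,z) k₂(w,u) du| ≤ C(s) ⟨z − (χ₁∘χ₂)(w)⟩^{-s} for all w, z ∈ ℝ^{2d}. -/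
import Mathlib


/-!
STATEMENT 9: composition rule for (continuous) Gabor matrices: if `k₁, k₂` decay along
the graphs of bi-Lipschitz bijections `χ₁, χ₂`, then the composed kernel
`∫ k₁(u,z) k₂(w,u) du` decays along the graph of `χ₁ ∘ χ₂`, with a constant of the form
`C₀(s) · C₁(s') · C₂(s')`, where `C₀` depends only on `s`, `d` and the Lipschitz
constants of `χ₁` and `χ₁⁻¹`.
-/

open Real MeasureTheory

noncomputable section

/-- The Japanese bracket `⟨z⟩ = (1 + |z|²)^{1/2}`. -/
def jap {n : ℕ} (z : EuclideanSpace ℝ (Fin n)) : ℝ := Real.sqrt (1 + ‖z‖ ^ 2)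

lemma one_le_jap {n : ℕ} (z : EuclideanSpace ℝ (Fin n)) : 1 ≤ jap z := by
  rw [jap]
  nlinarith [Real.sq_sqrt (show (0:ℝ) ≤ 1 + ‖z‖ ^ 2 by positivity),
    Real.sqrt_nonneg (1 + ‖z‖ ^ 2), sq_nonneg ‖z‖]

lemma jap_pos {n : ℕ} (z : EuclideanSpace ℝ (Fin n)) : 0 < jap z :=
  lt_of_lt_of_le one_pos (one_le_jap z)

lemma jap_add_le {n : ℕ} (a b : EuclideanSpace ℝ (Fin n)) :
    jap (a + b) ≤ Real.sqrt 2 * jap a * jap b := by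
  rw [jap, jap, jap, ← Real.sqrt_mul (by norm_num), ← Real.sqrt_mul (by positivity)]
  apply Real.sqrt_le_sqrt
  have h2 : ‖a + b‖ ^ 2 ≤ (‖a‖ + ‖b‖) ^ 2 :=
    pow_le_pow_left₀ (norm_nonneg _) (norm_add_le a b) _
  nlinarith [norm_nonneg a, norm_nonneg b, sq_nonneg (‖a‖ - ‖b‖), sq_nonneg (‖a‖ * ‖b‖)]

lemma jap_lip_le {n : ℕ} {K : NNReal} {χ : EuclideanSpace ℝ (Fin n) → EuclideanSpace ℝ (Fin n)}
    (hχ : LipschitzWith K χ) (u v : EuclideanSpace ℝ (Fin n)) :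
    jap (χ u - χ v) ≤ max 1 (K:ℝ) * jap (u - v) := by
  have hK : (0:ℝ) ≤ max 1 (K:ℝ) := le_trans zero_le_one (le_max_left _ _)
  rw [jap, jap, ← Real.sqrt_sq hK, ← Real.sqrt_mul (by positivity)]
  apply Real.sqrt_le_sqrt
  have h1 : ‖χ u - χ v‖ ≤ (K:ℝ) * ‖u - v‖ := by
    have := hχ.dist_le_mul u v
    rwa [dist_eq_norm, dist_eq_norm] at this
  have h2 : ‖χ u - χ v‖ ^ 2 ≤ (K:ℝ) ^ 2 * ‖u - v‖ ^ 2 := by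
    rw [← mul_pow]
    exact pow_le_pow_left₀ (norm_nonneg _) h1 _
  have h3 : (K:ℝ) ^ 2 ≤ max 1 (K:ℝ) ^ 2 :=
    pow_le_pow_left₀ K.coe_nonneg (le_max_right _ _) _
  have h4 : (1:ℝ) ≤ max 1 (K:ℝ) ^ 2 := by
    calc (1:ℝ) = 1 ^ 2 := by norm_num
    _ ≤ max 1 (K:ℝ) ^ 2 := pow_le_pow_left₀ zero_le_one (le_max_left _ _) _
  nlinarith [sq_nonneg ‖u - v‖]

lemma integrable_jap_neg {n : ℕ} {r : ℝ} (hr : (n : ℝ) < r) :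
    Integrable (fun u : EuclideanSpace ℝ (Fin n) => jap u ^ (-r)) := by
  have : ∀ u : EuclideanSpace ℝ (Fin n), jap u ^ (-r) = ((1:ℝ) + ‖u‖ ^ 2) ^ (-r / 2) := by
    intro u
    rw [jap, Real.sqrt_eq_rpow, ← Real.rpow_mul (by positivity)]
    ring_nf
  simp_rw [this]
  apply integrable_rpow_neg_one_add_norm_sq
  simpa using hr

theorem statement9 (d : ℕ) (K K' : NNReal) (s : ℝ) (hs : 0 ≤ s) :
    ∃ s' : ℝ, s ≤ s' ∧ ∃ C₀ : ℝ, 0 < C₀ ∧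
      ∀ (χ₁ χ₂ ψ₁ : EuclideanSpace ℝ (Fin (2 * d)) → EuclideanSpace ℝ (Fin (2 * d))),
        LipschitzWith K χ₁ → LipschitzWith K' ψ₁ →
        Function.LeftInverse ψ₁ χ₁ → Function.RightInverse ψ₁ χ₁ →
        Function.Bijective χ₂ →
        (∃ K₂ : NNReal, LipschitzWith K₂ χ₂) →
        (∃ ψ₂, Function.LeftInverse ψ₂ χ₂ ∧ Function.RightInverse ψ₂ χ₂ ∧
          ∃ K₂' : NNReal, LipschitzWith K₂' ψ₂) →
        ∀ k₁ k₂ : EuclideanSpace ℝ (Fin (2 * d)) × EuclideanSpace ℝ (Fin (2 * d)) → ℂ,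
          Measurable k₁ → Measurable k₂ →
          ∀ C₁ C₂ : ℝ → ℝ, (∀ σ, 0 ≤ σ → 0 ≤ C₁ σ) → (∀ σ, 0 ≤ σ → 0 ≤ C₂ σ) →
          (∀ σ, 0 ≤ σ → ∀ w z, ‖k₁ (w, z)‖ ≤ C₁ σ * jap (z - χ₁ w) ^ (-σ)) →
          (∀ σ, 0 ≤ σ → ∀ w z, ‖k₂ (w, z)‖ ≤ C₂ σ * jap (z - χ₂ w) ^ (-σ)) →
          ∀ w z, ‖∫ u, k₁ (u, z) * k₂ (w, u)‖ ≤
            C₀ * C₁ s' * C₂ s' * jap (z - χ₁ (χ₂ w)) ^ (-s) := by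
  set r : ℝ := 2 * d + 1 with hr_def
  have hr_pos : 0 < r := by positivity
  set M : ℝ := Real.sqrt 2 * max 1 (K:ℝ) with hM_def
  have hM_one : 1 ≤ M := by
    have h1 : (1:ℝ) ≤ Real.sqrt 2 := by
      rw [show (1:ℝ) = Real.sqrt 1 by simp]
      exact Real.sqrt_le_sqrt (by norm_num)
    calc (1:ℝ) = 1 * 1 := by norm_num
    _ ≤ Real.sqrt 2 * max 1 (K:ℝ) :=
        mul_le_mul h1 (le_max_left _ _) zero_le_one (by positivity)
  have hM_pos : 0 < M := lt_of_lt_of_le one_pos hM_one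
  have hMs_pos : 0 < M ^ s := Real.rpow_pos_of_pos hM_pos s
  set I : ℝ := ∫ u : EuclideanSpace ℝ (Fin (2 * d)), jap u ^ (-r) with hI_def
  have hI_nonneg : 0 ≤ I := integral_nonneg fun u => Real.rpow_nonneg (jap_pos u).le _
  have hInt : Integrable (fun u : EuclideanSpace ℝ (Fin (2 * d)) => jap u ^ (-r)) := by
    apply integrable_jap_neg; rw [hr_def]; push_cast; linarith
  refine ⟨s + r, le_add_of_nonneg_right hr_pos.le, M ^ s * (I + 1),
    mul_pos hMs_pos (by linarith),
    fun χ₁ χ₂ ψ₁ hχ₁ hψ₁ hli hri hbij ⟨K₂, hχ₂⟩ _ k₁ k₂ hk₁ hk₂ C₁ C₂ hC₁ hC₂ hb₁ hb₂ w z => ?_⟩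
  set s' : ℝ := s + r with hs'_def
  have hs' : 0 ≤ s' := by positivity
  set J : ℝ := jap (z - χ₁ (χ₂ w)) ^ (-s) with hJ_def
  have hJ_nonneg : 0 ≤ J := Real.rpow_nonneg (jap_pos _).le _
  -- the key pointwise estimate
  have key : ∀ u : EuclideanSpace ℝ (Fin (2 * d)),
      jap (z - χ₁ u) ^ (-s') * jap (u - χ₂ w) ^ (-s') ≤
        M ^ s * J * jap (u - χ₂ w) ^ (-r) := by
    intro u
    set A := jap (z - χ₁ u) with hA
    set B := jap (u - χ₂ w) with hB
    set D := jap (z - χ₁ (χ₂ w)) with hD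
    have hA1 : 1 ≤ A := one_le_jap _
    have hB1 : 1 ≤ B := one_le_jap _
    have hD1 : 1 ≤ D := one_le_jap _
    have hA0 : (0:ℝ) < A := lt_of_lt_of_le one_pos hA1
    have hB0 : (0:ℝ) < B := lt_of_lt_of_le one_pos hB1
    have hD0 : (0:ℝ) < D := lt_of_lt_of_le one_pos hD1
    have hDle : D ≤ M * A * B := by
      have heq : z - χ₁ (χ₂ w) = (z - χ₁ u) + (χ₁ u - χ₁ (χ₂ w)) := by abel
      calc D = jap ((z - χ₁ u) + (χ₁ u - χ₁ (χ₂ w))) := by rw [hD, heq]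
      _ ≤ Real.sqrt 2 * A * jap (χ₁ u - χ₁ (χ₂ w)) := jap_add_le _ _
      _ ≤ Real.sqrt 2 * A * (max 1 (K:ℝ) * B) := by
          refine mul_le_mul_of_nonneg_left (jap_lip_le hχ₁ u (χ₂ w)) ?_
          have := Real.sqrt_nonneg 2
          nlinarith
      _ = M * A * B := by rw [hM_def]; ring
    have hDs : D ^ s ≤ M ^ s * A ^ s * B ^ s := by
      calc D ^ s ≤ (M * A * B) ^ s := Real.rpow_le_rpow hD0.le hDle hs
      _ = M ^ s * A ^ s * B ^ s := by
          rw [Real.mul_rpow (by positivity) hB0.le, Real.mul_rpow hM_pos.le hA0.le]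
    have hApos : 0 < A ^ s := Real.rpow_pos_of_pos hA0 _
    have hBpos : 0 < B ^ s := Real.rpow_pos_of_pos hB0 _
    have hDpos : 0 < D ^ s := Real.rpow_pos_of_pos hD0 _
    have hAs : A ^ (-s') = A ^ (-s) * A ^ (-r) := by
      rw [show -s' = -s + -r by rw [hs'_def]; ring, Real.rpow_add hA0]
    have hBs : B ^ (-s') = B ^ (-s) * B ^ (-r) := by
      rw [show -s' = -s + -r by rw [hs'_def]; ring, Real.rpow_add hB0]
    have hAr : A ^ (-r) ≤ 1 :=
      Real.rpow_le_one_of_one_le_of_nonpos hA1 (by linarith)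
    have hAneg : 0 ≤ A ^ (-s) := Real.rpow_nonneg hA0.le _
    have hBneg : 0 ≤ B ^ (-s) := Real.rpow_nonneg hB0.le _
    have hBrneg : 0 ≤ B ^ (-r) := Real.rpow_nonneg hB0.le _
    have hmain : A ^ (-s) * B ^ (-s) ≤ M ^ s * D ^ (-s) := by
      have h2 : 1 * D ^ s ≤ M ^ s * (A ^ s * B ^ s) := by rw [one_mul, ← mul_assoc]; exact hDs
      calc A ^ (-s) * B ^ (-s) = 1 / (A ^ s * B ^ s) := by
            rw [Real.rpow_neg hA0.le, Real.rpow_neg hB0.le]; field_simp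
      _ ≤ M ^ s / D ^ s := by
            rw [div_le_div_iff₀ (by positivity) hDpos]; exact h2
      _ = M ^ s * D ^ (-s) := by rw [Real.rpow_neg hD0.le]; ring
    have hDJ : D ^ (-s) = J := by rw [hJ_def, hD]
    calc A ^ (-s') * B ^ (-s')
        = (A ^ (-s) * B ^ (-s)) * A ^ (-r) * B ^ (-r) := by rw [hAs, hBs]; ring
    _ ≤ (M ^ s * D ^ (-s)) * 1 * B ^ (-r) := by
        refine mul_le_mul_of_nonneg_right ?_ hBrneg
        exact mul_le_mul hmain hAr (Real.rpow_nonneg hA0.le _) (by positivity)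
    _ = M ^ s * D ^ (-s) * B ^ (-r) := by ring
    _ = M ^ s * J * B ^ (-r) := by rw [hDJ]
  have hC₁' : 0 ≤ C₁ s' := hC₁ s' hs'
  have hC₂' : 0 ≤ C₂ s' := hC₂ s' hs'
  have hgInt : Integrable (fun u : EuclideanSpace ℝ (Fin (2 * d)) =>
      C₁ s' * C₂ s' * (M ^ s * J * jap (u - χ₂ w) ^ (-r))) :=
    ((hInt.comp_sub_right (χ₂ w)).const_mul (M ^ s * J)).const_mul (C₁ s' * C₂ s')
  have hbound : ∀ u : EuclideanSpace ℝ (Fin (2 * d)), ‖k₁ (u, z) * k₂ (w, u)‖ ≤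
      C₁ s' * C₂ s' * (M ^ s * J * jap (u - χ₂ w) ^ (-r)) := by
    intro u
    rw [norm_mul]
    calc ‖k₁ (u, z)‖ * ‖k₂ (w, u)‖
        ≤ (C₁ s' * jap (z - χ₁ u) ^ (-s')) * (C₂ s' * jap (u - χ₂ w) ^ (-s')) :=
          mul_le_mul (hb₁ s' hs' u z) (hb₂ s' hs' w u) (norm_nonneg _)
            (mul_nonneg hC₁' (Real.rpow_nonneg (jap_pos _).le _))
    _ = C₁ s' * C₂ s' * (jap (z - χ₁ u) ^ (-s') * jap (u - χ₂ w) ^ (-s')) := by ring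
    _ ≤ C₁ s' * C₂ s' * (M ^ s * J * jap (u - χ₂ w) ^ (-r)) :=
          mul_le_mul_of_nonneg_left (key u) (mul_nonneg hC₁' hC₂')
  have hnorm : ‖∫ u, k₁ (u, z) * k₂ (w, u)‖ ≤
      ∫ u : EuclideanSpace ℝ (Fin (2 * d)),
        C₁ s' * C₂ s' * (M ^ s * J * jap (u - χ₂ w) ^ (-r)) :=
    norm_integral_le_of_norm_le hgInt (Filter.Eventually.of_forall hbound)
  have hgint_eq : (∫ u : EuclideanSpace ℝ (Fin (2 * d)),
      C₁ s' * C₂ s' * (M ^ s * J * jap (u - χ₂ w) ^ (-r))) =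
      C₁ s' * C₂ s' * (M ^ s * J * I) := by
    rw [integral_const_mul, integral_const_mul, hI_def,
      integral_sub_right_eq_self (fun u => jap u ^ (-r)) (χ₂ w)]
  have hfin : C₁ s' * C₂ s' * (M ^ s * J * I) ≤ M ^ s * (I + 1) * C₁ s' * C₂ s' * J := by
    have hc : 0 ≤ C₁ s' * C₂ s' * M ^ s * J :=
      mul_nonneg (mul_nonneg (mul_nonneg hC₁' hC₂') hMs_pos.le) hJ_nonneg
    have h1 : (C₁ s' * C₂ s' * M ^ s * J) * I ≤ (C₁ s' * C₂ s' * M ^ s * J) * (I + 1) :=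
      mul_le_mul_of_nonneg_left (by linarith) hc
    nlinarith [h1]
  calc ‖∫ u, k₁ (u, z) * k₂ (w, u)‖
      ≤ ∫ u : EuclideanSpace ℝ (Fin (2 * d)),
        C₁ s' * C₂ s' * (M ^ s * J * jap (u - χ₂ w) ^ (-r)) := hnorm
  _ = C₁ s' * C₂ s' * (M ^ s * J * I) := hgint_eq
  _ ≤ M ^ s * (I + 1) * C₁ s' * C₂ s' * J := hfin
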